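/- Fix α > 2 and ρ ∈ (0,1), and let s* be the unique maximizer over s ∈ [0,1] of ρ·s + √((1−ρ²)·g_α(s)), and r* = r_α(s*). If ρ > ρ_c(α) := √(1 − (π/α)/tan(π/α)), then s* = 1, r* = 0, and 1 + (s*)² + (r*)² − 2|s*| = 0. If ρ < ρ_c(α), then s* < 1 and 1 + (s*)² + (r*)² − 2|s*| > 0. -/

import Mathlib

/-- `c_α = 1/tan(π/α)`. -/
noncomputable def cAlpha (α : ℝ) : ℝ := 1 / Real.tan (Real.pi / α)

/-- `r_α(s) = √(c_α² + 1 − s²) − c_α`. -/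
noncomputable def rAlpha (α s : ℝ) : ℝ :=
  Real.sqrt (cAlpha α ^ 2 + 1 - s ^ 2) - cAlpha α

/-- `g_α(s) = −1 − s² + (2α/π)·r_α(s) + (2αs/π)·arctan(s/(r_α(s) + c_α))`. -/
noncomputable def gAlpha (α s : ℝ) : ℝ :=
  -1 - s ^ 2 + 2 * α * rAlpha α s / Real.pi
    + 2 * α * s / Real.pi * Real.arctan (s / (rAlpha α s + cAlpha α))

noncomputable def qA (α s : ℝ) : ℝ := Real.sqrt (cAlpha α ^ 2 + 1 - s ^ 2)

section aux

variable {α : ℝ} (hα : 2 < α)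

lemma pia_pos (hα : 2 < α) : 0 < Real.pi / α := by
  have := Real.pi_pos; positivity

lemma pia_lt (hα : 2 < α) : Real.pi / α < Real.pi / 2 :=
  div_lt_div_of_pos_left Real.pi_pos (by norm_num) hα

lemma tan_pia_pos (hα : 2 < α) : 0 < Real.tan (Real.pi / α) :=
  Real.tan_pos_of_pos_of_lt_pi_div_two (pia_pos hα) (pia_lt hα)

lemma c_pos (hα : 2 < α) : 0 < cAlpha α := by
  have := tan_pia_pos hα; unfold cAlpha; positivity

lemma pia_lt_tan (hα : 2 < α) : Real.pi / α < Real.tan (Real.pi / α) :=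
  Real.lt_tan (pia_pos hα) (pia_lt hα)

lemma arctan_inv_c (hα : 2 < α) : Real.arctan (1 / cAlpha α) = Real.pi / α := by
  rw [cAlpha, one_div_one_div]
  exact Real.arctan_tan (by linarith [pia_pos hα, Real.pi_pos]) (by
    have := pia_lt hα; linarith)

lemma q_pos (hα : 2 < α) {s : ℝ} (hs : s ^ 2 ≤ 1) : 0 < qA α s := by
  have hc := c_pos hα
  exact Real.sqrt_pos.mpr (by nlinarith)

lemma q_sq (hα : 2 < α) {s : ℝ} (hs : s ^ 2 ≤ 1) :
    qA α s ^ 2 = cAlpha α ^ 2 + 1 - s ^ 2 := by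
  have hc := c_pos hα
  exact Real.sq_sqrt (by nlinarith)

lemma q_one (hα : 2 < α) : qA α 1 = cAlpha α := by
  have hc := c_pos hα
  unfold qA
  rw [show cAlpha α ^ 2 + 1 - 1 ^ 2 = cAlpha α ^ 2 by ring, Real.sqrt_sq hc.le]

lemma c_le_q (hα : 2 < α) {s : ℝ} (hs : s ^ 2 ≤ 1) : cAlpha α ≤ qA α s := by
  have hc := c_pos hα
  rw [show cAlpha α = Real.sqrt (cAlpha α ^ 2) from (Real.sqrt_sq hc.le).symm]
  exact Real.sqrt_le_sqrt (by nlinarith)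

lemma r_eq (s : ℝ) : rAlpha α s = qA α s - cAlpha α := rfl

lemma r_add_c (s : ℝ) : rAlpha α s + cAlpha α = qA α s := by
  rw [r_eq]; ring

lemma gAlpha_eq : gAlpha α = fun s =>
    -1 - s ^ 2 + 2 * α * (qA α s - cAlpha α) / Real.pi
      + 2 * α * s / Real.pi * Real.arctan (s / qA α s) := by
  funext s
  rw [gAlpha, r_add_c, r_eq]

lemma g_one (hα : 2 < α) : gAlpha α 1 = 0 := by
  have hc := c_pos hα
  have hπ := Real.pi_pos
  have hα0 : (0:ℝ) < α := by linarith
  rw [gAlpha_eq]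
  simp only [q_one hα, one_div, sub_self]
  rw [← one_div, arctan_inv_c hα]
  field_simp
  ring

lemma hasDerivAt_q (hα : 2 < α) {s : ℝ} (hs : s ^ 2 ≤ 1) :
    HasDerivAt (qA α) (-(2 * s) / (2 * qA α s)) s := by
  have hpos : (0:ℝ) < cAlpha α ^ 2 + 1 - s ^ 2 := by
    have := c_pos hα; nlinarith
  have hu : HasDerivAt (fun s : ℝ => cAlpha α ^ 2 + 1 - s ^ 2) (-(2 * s)) s := by
    simpa using (hasDerivAt_pow 2 s).const_sub (cAlpha α ^ 2 + 1)
  exact hu.sqrt (ne_of_gt hpos)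

lemma hasDerivAt_arctanQ (hα : 2 < α) {s : ℝ} (hs : s ^ 2 ≤ 1) :
    HasDerivAt (fun s => Real.arctan (s / qA α s)) (1 / qA α s) s := by
  have hq := q_pos hα hs
  have hdiv : HasDerivAt (fun s => s / qA α s)
      ((1 * qA α s - s * (-(2 * s) / (2 * qA α s))) / qA α s ^ 2) s :=
    (hasDerivAt_id s).div (hasDerivAt_q hα hs) (ne_of_gt hq)
  have := hdiv.arctan
  convert this using 1
  have h1 : qA α s ≠ 0 := ne_of_gt hq
  have h2 : 1 + (s / qA α s) ^ 2 ≠ 0 := by positivity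
  field_simp
  ring

lemma hasDerivAt_g (hα : 2 < α) {s : ℝ} (hs : s ^ 2 ≤ 1) :
    HasDerivAt (gAlpha α)
      (-(2 * s) + 2 * α / Real.pi * Real.arctan (s / qA α s)) s := by
  have hq := q_pos hα hs
  have hπ := Real.pi_pos
  have h1 : HasDerivAt (fun s : ℝ => -1 - s ^ 2) (-(2 * s)) s := by
    simpa using (hasDerivAt_pow 2 s).const_sub (-1 : ℝ)
  have h2 : HasDerivAt (fun s => 2 * α * (qA α s - cAlpha α) / Real.pi)
      (2 * α * (-(2 * s) / (2 * qA α s)) / Real.pi) s :=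
    (((hasDerivAt_q hα hs).sub_const (cAlpha α)).const_mul (2 * α)).div_const Real.pi
  have h3 : HasDerivAt (fun s : ℝ => 2 * α * s / Real.pi) (2 * α * 1 / Real.pi) s :=
    ((hasDerivAt_id s).const_mul (2 * α)).div_const Real.pi
  have hprod := h3.mul (hasDerivAt_arctanQ hα hs)
  have htot := (h1.add h2).add hprod
  rw [gAlpha_eq]
  refine htot.congr_deriv ?_
  have h1' : qA α s ≠ 0 := ne_of_gt hq
  field_simp
  ring


lemma anti_helper {a b : ℝ} {f f' : ℝ → ℝ}
    (hder : ∀ x ∈ Set.Icc a b, HasDerivAt f (f' x) x)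
    (hle : ∀ x ∈ Set.Ioo a b, f' x ≤ 0) : AntitoneOn f (Set.Icc a b) := by
  apply antitoneOn_of_deriv_nonpos (convex_Icc a b)
  · intro x hx; exact (hder x hx).continuousAt.continuousWithinAt
  · rw [interior_Icc]; intro x hx
    exact (hder x (Set.Ioo_subset_Icc_self hx)).differentiableAt.differentiableWithinAt
  · rw [interior_Icc]; intro x hx
    rw [(hder x (Set.Ioo_subset_Icc_self hx)).deriv]; exact hle x hx

lemma mono_helper {a b : ℝ} {f f' : ℝ → ℝ}
    (hder : ∀ x ∈ Set.Icc a b, HasDerivAt f (f' x) x)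
    (hle : ∀ x ∈ Set.Ioo a b, 0 ≤ f' x) : MonotoneOn f (Set.Icc a b) := by
  apply monotoneOn_of_deriv_nonneg (convex_Icc a b)
  · intro x hx; exact (hder x hx).continuousAt.continuousWithinAt
  · rw [interior_Icc]; intro x hx
    exact (hder x (Set.Ioo_subset_Icc_self hx)).differentiableAt.differentiableWithinAt
  · rw [interior_Icc]; intro x hx
    rw [(hder x (Set.Ioo_subset_Icc_self hx)).deriv]; exact hle x hx

lemma psi_ge (hα : 2 < α) {s : ℝ} (hs : s ∈ Set.Icc (0:ℝ) 1) :
    Real.pi / α ≤ Real.arctan (s / qA α s) + (1 - s) / cAlpha α := by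
  have hc := c_pos hα
  have hanti : AntitoneOn (fun s => Real.arctan (s / qA α s) + (1 - s) / cAlpha α)
      (Set.Icc 0 1) := by
    apply anti_helper (f' := fun x => 1 / qA α x - 1 / cAlpha α)
    · intro x hx
      have hx2 : x ^ 2 ≤ 1 := by nlinarith [hx.1, hx.2]
      have h2 : HasDerivAt (fun x : ℝ => (1 - x) / cAlpha α) (-1 / cAlpha α) x := by
        simpa using ((hasDerivAt_id x).const_sub 1).div_const (cAlpha α)
      refine ((hasDerivAt_arctanQ hα hx2).add h2).congr_deriv ?_; ring
    · intro x hx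
      have hx2 : x ^ 2 ≤ 1 := by nlinarith [hx.1.le, hx.2.le]
      have hle := c_le_q hα hx2
      have : 1 / qA α x ≤ 1 / cAlpha α := one_div_le_one_div_of_le hc hle
      linarith
  have h1 := hanti hs (Set.right_mem_Icc.mpr zero_le_one) hs.2
  simp only [q_one hα, sub_self, zero_div, add_zero, arctan_inv_c hα] at h1
  linarith [h1]

lemma psi_le (hα : 2 < α) {t : ℝ} (ht : t ∈ Set.Ico (0:ℝ) 1) {s : ℝ}
    (hst : s ∈ Set.Icc t 1) :
    Real.arctan (s / qA α s) + (1 - s) / cAlpha α ≤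
      Real.pi / α + (1 / cAlpha α - 1 / qA α t) * (1 - s) := by
  have hc := c_pos hα
  have ht2 : t ^ 2 ≤ 1 := by nlinarith [ht.1, ht.2.le]
  have hqt := q_pos hα ht2
  have hmono : MonotoneOn (fun s => Real.arctan (s / qA α s) + (1 - s) / cAlpha α
      + (1 / cAlpha α - 1 / qA α t) * s) (Set.Icc t 1) := by
    apply mono_helper (f' := fun x => 1 / qA α x - 1 / qA α t)
    · intro x hx
      have hx2 : x ^ 2 ≤ 1 := by nlinarith [ht.1, hx.1, hx.2]
      have h2 : HasDerivAt (fun x : ℝ => (1 - x) / cAlpha α) (-1 / cAlpha α) x := by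
        simpa using ((hasDerivAt_id x).const_sub 1).div_const (cAlpha α)
      have h3 : HasDerivAt (fun x : ℝ => (1 / cAlpha α - 1 / qA α t) * x)
          ((1 / cAlpha α - 1 / qA α t) * 1) x := (hasDerivAt_id x).const_mul _
      refine (((hasDerivAt_arctanQ hα hx2).add h2).add h3).congr_deriv ?_; ring
    · intro x hx
      have hx2 : x ^ 2 ≤ 1 := by nlinarith [ht.1, hx.1.le, hx.2.le]
      have hqx := q_pos hα hx2
      have hle : qA α x ≤ qA α t := by
        apply Real.sqrt_le_sqrt; nlinarith [ht.1, hx.1.le, hx.2.le]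
      have : 1 / qA α t ≤ 1 / qA α x := one_div_le_one_div_of_le hqx hle
      linarith
  have h1 := hmono hst (Set.right_mem_Icc.mpr ht.2.le) hst.2
  simp only [q_one hα, sub_self, zero_div, add_zero, arctan_inv_c hα] at h1
  -- h1 : arctan (s/q s) + (1-s)/c + B*s ≤ π/α + B*1
  nlinarith [h1]

lemma g_le (hα : 2 < α) {s : ℝ} (hs : s ∈ Set.Icc (0:ℝ) 1) :
    gAlpha α s ≤ (α / (Real.pi * cAlpha α) - 1) * (1 - s) ^ 2 := by
  have hc := c_pos hα
  have hπ := Real.pi_pos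
  have hα0 : (0:ℝ) < α := by linarith
  have hanti : AntitoneOn
      (fun s => (α / (Real.pi * cAlpha α) - 1) * (1 - s) ^ 2 - gAlpha α s)
      (Set.Icc 0 1) := by
    apply anti_helper (f' := fun x => -(2 * (α / (Real.pi * cAlpha α) - 1) * (1 - x))
      - (-(2 * x) + 2 * α / Real.pi * Real.arctan (x / qA α x)))
    · intro x hx
      have hx2 : x ^ 2 ≤ 1 := by nlinarith [hx.1, hx.2]
      have h1 : HasDerivAt (fun x : ℝ => (α / (Real.pi * cAlpha α) - 1) * (1 - x) ^ 2)
          (-(2 * (α / (Real.pi * cAlpha α) - 1) * (1 - x))) x := by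
        have := (((hasDerivAt_id x).const_sub 1).pow 2).const_mul
          (α / (Real.pi * cAlpha α) - 1)
        refine this.congr_deriv ?_
        simp only [id_eq]; push_cast; ring
      exact h1.sub (hasDerivAt_g hα hx2)
    · intro x hx
      have hx' : x ∈ Set.Icc (0:ℝ) 1 := Set.Ioo_subset_Icc_self hx
      have harct : Real.pi / α - (1 - x) / cAlpha α ≤ Real.arctan (x / qA α x) := by
        linarith [psi_ge hα hx']
      have h2 := mul_le_mul_of_nonneg_left harct (by positivity : (0:ℝ) ≤ 2 * α / Real.pi)
      have heq : -(2 * (α / (Real.pi * cAlpha α) - 1) * (1 - x)) - (-(2 * x)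
          + 2 * α / Real.pi * (Real.pi / α - (1 - x) / cAlpha α)) = 0 := by
        field_simp; ring
      linarith [h2, heq]
  have h1 := hanti hs (Set.right_mem_Icc.mpr zero_le_one) hs.2
  have hg1 := g_one hα
  simp only [hg1] at h1
  nlinarith [h1]

lemma g_ge (hα : 2 < α) {t : ℝ} (ht : t ∈ Set.Ico (0:ℝ) 1) :
    (α / (Real.pi * qA α t) - 1) * (1 - t) ^ 2 ≤ gAlpha α t := by
  have hc := c_pos hα
  have hπ := Real.pi_pos
  have hα0 : (0:ℝ) < α := by linarith
  have ht2 : t ^ 2 ≤ 1 := by nlinarith [ht.1, ht.2.le]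
  have hqt := q_pos hα ht2
  have hanti : AntitoneOn
      (fun s => gAlpha α s - (α / (Real.pi * qA α t) - 1) * (1 - s) ^ 2)
      (Set.Icc t 1) := by
    apply anti_helper (f' := fun x => (-(2 * x) + 2 * α / Real.pi * Real.arctan (x / qA α x))
      - (-(2 * (α / (Real.pi * qA α t) - 1) * (1 - x))))
    · intro x hx
      have hx2 : x ^ 2 ≤ 1 := by nlinarith [ht.1, hx.1, hx.2]
      have h1 : HasDerivAt (fun x : ℝ => (α / (Real.pi * qA α t) - 1) * (1 - x) ^ 2)
          (-(2 * (α / (Real.pi * qA α t) - 1) * (1 - x))) x := by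
        have := (((hasDerivAt_id x).const_sub 1).pow 2).const_mul
          (α / (Real.pi * qA α t) - 1)
        refine this.congr_deriv ?_
        simp only [id_eq]; push_cast; ring
      exact (hasDerivAt_g hα hx2).sub h1
    · intro x hx
      have hx' : x ∈ Set.Icc t 1 := Set.Ioo_subset_Icc_self hx
      have hid : Real.pi / α + (1 / cAlpha α - 1 / qA α t) * (1 - x) - (1 - x) / cAlpha α
          = Real.pi / α - (1 - x) / qA α t := by ring
      have harct : Real.arctan (x / qA α x) ≤ Real.pi / α - (1 - x) / qA α t := by
        linarith [psi_le hα ht hx', hid]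
      have h2 := mul_le_mul_of_nonneg_left harct (by positivity : (0:ℝ) ≤ 2 * α / Real.pi)
      have heq : -(2 * x) + 2 * α / Real.pi * (Real.pi / α - (1 - x) / qA α t)
          + 2 * (α / (Real.pi * qA α t) - 1) * (1 - x) = 0 := by
        field_simp; ring
      linarith [h2, heq]
  have h1 := hanti (Set.left_mem_Icc.mpr ht.2.le) (Set.right_mem_Icc.mpr ht.2.le) ht.2.le
  have hg1 := g_one hα
  simp only [hg1] at h1
  nlinarith [h1]


end aux

set_option maxHeartbeats 2000000 in
/-- Fix `α > 2` and `ρ ∈ (0,1)`, and let `s*` be the unique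
maximizer over `s ∈ [0,1]` of `ρ·s + √((1−ρ²)·g_α(s))`, and `r* = r_α(s*)`.
If `ρ > ρ_c(α) := √(1 − (π/α)/tan(π/α))`, then `s* = 1`, `r* = 0`, and
`1 + (s*)² + (r*)² − 2|s*| = 0`.  If `ρ < ρ_c(α)`, then `s* < 1` and
`1 + (s*)² + (r*)² − 2|s*| > 0`. -/
theorem phaseMax_scalar_solution_phase_transition (α ρ : ℝ) (hα : 2 < α)
    (hρ : ρ ∈ Set.Ioo (0 : ℝ) 1) (sstar : ℝ) (hs : sstar ∈ Set.Icc (0 : ℝ) 1)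
    (hmax : IsMaxOn (fun s : ℝ => ρ * s + Real.sqrt ((1 - ρ ^ 2) * gAlpha α s))
      (Set.Icc 0 1) sstar)
    (huniq : ∀ s ∈ Set.Icc (0 : ℝ) 1,
      IsMaxOn (fun s : ℝ => ρ * s + Real.sqrt ((1 - ρ ^ 2) * gAlpha α s))
        (Set.Icc 0 1) s → s = sstar) :
    (ρ > Real.sqrt (1 - (Real.pi / α) / Real.tan (Real.pi / α)) →
      sstar = 1 ∧ rAlpha α sstar = 0 ∧
        1 + sstar ^ 2 + rAlpha α sstar ^ 2 - 2 * |sstar| = 0) ∧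
    (ρ < Real.sqrt (1 - (Real.pi / α) / Real.tan (Real.pi / α)) →
      sstar < 1 ∧ 0 < 1 + sstar ^ 2 + rAlpha α sstar ^ 2 - 2 * |sstar|) := by
  obtain ⟨hρ0, hρ1⟩ := hρ
  have hπ := Real.pi_pos
  have hα0 : (0:ℝ) < α := by linarith
  have hc := c_pos hα
  have hval : 1 - (Real.pi / α) / Real.tan (Real.pi / α)
      = 1 - Real.pi / α * cAlpha α := by
    rw [cAlpha]; ring
  constructor
  · intro hgt
    rw [hval] at hgt
    have hρ2 : 1 - Real.pi / α * cAlpha α < ρ ^ 2 := (Real.sqrt_lt' hρ0).mp hgt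
    have hρ2' : α - Real.pi * cAlpha α < ρ ^ 2 * α := by
      have h1 := mul_lt_mul_of_pos_right hρ2 hα0
      have he : (1 - Real.pi / α * cAlpha α) * α = α - Real.pi * cAlpha α := by
        field_simp
      linarith [he ▸ h1]
    have hP : 0 < Real.pi * cAlpha α := by positivity
    have hKle : (1 - ρ ^ 2) * (α / (Real.pi * cAlpha α) - 1) ≤ ρ ^ 2 := by
      have hKdef : (α / (Real.pi * cAlpha α) - 1) * (Real.pi * cAlpha α)
          = α - Real.pi * cAlpha α := by field_simp
      nlinarith [hρ2', hKdef, hP, sq_nonneg ρ, mul_pos hP hP]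
    have hmax1 : IsMaxOn (fun s : ℝ => ρ * s + Real.sqrt ((1 - ρ ^ 2) * gAlpha α s))
        (Set.Icc 0 1) 1 := by
      rw [isMaxOn_iff]
      intro x hx
      have hgle := g_le hα hx
      have h1ρ : (0:ℝ) ≤ 1 - ρ ^ 2 := by nlinarith
      have s1 : (1 - ρ ^ 2) * gAlpha α x
          ≤ (1 - ρ ^ 2) * ((α / (Real.pi * cAlpha α) - 1) * (1 - x) ^ 2) :=
        mul_le_mul_of_nonneg_left hgle h1ρ
      have s2 : (1 - ρ ^ 2) * (α / (Real.pi * cAlpha α) - 1) * (1 - x) ^ 2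
          ≤ ρ ^ 2 * (1 - x) ^ 2 := mul_le_mul_of_nonneg_right hKle (sq_nonneg _)
      have step1 : (1 - ρ ^ 2) * gAlpha α x ≤ (ρ * (1 - x)) ^ 2 := by nlinarith [s1, s2]
      have step2 : Real.sqrt ((1 - ρ ^ 2) * gAlpha α x) ≤ ρ * (1 - x) := by
        rw [show ρ * (1 - x) = Real.sqrt ((ρ * (1 - x)) ^ 2) from
          (Real.sqrt_sq (by nlinarith [hx.2] : (0:ℝ) ≤ ρ * (1 - x))).symm]
        exact Real.sqrt_le_sqrt step1
      simp only [g_one hα, mul_zero, Real.sqrt_zero, add_zero, mul_one]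
      linarith [step2]
    have h1s : (1:ℝ) = sstar :=
      huniq 1 (Set.mem_Icc.mpr ⟨zero_le_one, le_refl 1⟩) hmax1
    have hr1 : rAlpha α 1 = 0 := by
      rw [rAlpha, show cAlpha α ^ 2 + 1 - 1 ^ 2 = cAlpha α ^ 2 by ring,
        Real.sqrt_sq hc.le, sub_self]
    refine ⟨h1s.symm, ?_, ?_⟩
    · rw [← h1s, hr1]
    · rw [← h1s, hr1]; norm_num
  · intro hlt
    rw [hval] at hlt
    have hρ2 : ρ ^ 2 < 1 - Real.pi / α * cAlpha α := (Real.lt_sqrt hρ0.le).mp hlt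
    have he' : Real.pi * cAlpha α < (1 - ρ ^ 2) * α := by
      have h1 := mul_lt_mul_of_pos_right hρ2 hα0
      have he : (1 - Real.pi / α * cAlpha α) * α = α - Real.pi * cAlpha α := by
        field_simp
      nlinarith [h1, he]
    obtain ⟨e, hedef⟩ : ∃ e' : ℝ, e' = (1 - ρ ^ 2) * α - Real.pi * cAlpha α := ⟨_, rfl⟩
    have hepos : 0 < e := by rw [hedef]; linarith
    obtain ⟨δ, hδdef⟩ : ∃ d : ℝ, d = min (1 / 2) (e * cAlpha α / (2 * Real.pi)) := ⟨_, rfl⟩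
    have hδpos : 0 < δ := by
      rw [hδdef]; exact lt_min (by norm_num) (by positivity)
    have hδle : δ ≤ 1 / 2 := hδdef ▸ min_le_left _ _
    have hδle2 : δ ≤ e * cAlpha α / (2 * Real.pi) := hδdef ▸ min_le_right _ _
    obtain ⟨t, htdef⟩ : ∃ t' : ℝ, t' = 1 - δ := ⟨_, rfl⟩
    have ht : t ∈ Set.Ico (0:ℝ) 1 := ⟨by rw [htdef]; linarith, by rw [htdef]; linarith⟩
    have ht2 : t ^ 2 ≤ 1 := by nlinarith [ht.1, ht.2.le]
    have hqt := q_pos hα ht2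
    have hub : qA α t ≤ cAlpha α + δ / cAlpha α := by
      have hdc : cAlpha α * (δ / cAlpha α) = δ := by field_simp
      have h1 : cAlpha α ^ 2 + 1 - t ^ 2 ≤ (cAlpha α + δ / cAlpha α) ^ 2 := by
        have h1t : 1 - t ^ 2 = δ * (2 - δ) := by rw [htdef]; ring
        nlinarith [sq_nonneg (δ / cAlpha α), hδpos, hdc, h1t]
      calc qA α t ≤ Real.sqrt ((cAlpha α + δ / cAlpha α) ^ 2) := Real.sqrt_le_sqrt h1
        _ = cAlpha α + δ / cAlpha α := Real.sqrt_sq (by positivity)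
    have hπQ : Real.pi * qA α t < (1 - ρ ^ 2) * α := by
      have hm : Real.pi * qA α t ≤ Real.pi * (cAlpha α + δ / cAlpha α) :=
        mul_le_mul_of_nonneg_left hub hπ.le
      rw [mul_add] at hm
      have key : Real.pi * (e * cAlpha α / (2 * Real.pi) / cAlpha α) = e / 2 := by
        field_simp
      have hmono : Real.pi * (δ / cAlpha α)
          ≤ Real.pi * (e * cAlpha α / (2 * Real.pi) / cAlpha α) := by
        gcongr
      have h2 : Real.pi * (δ / cAlpha α) ≤ e / 2 := by linarith [key, hmono]
      have : Real.pi * cAlpha α + e = (1 - ρ ^ 2) * α := by rw [hedef]; ring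
      linarith [hm, h2, hepos]
    have hQP : 0 < Real.pi * qA α t := by positivity
    have hMkey : ρ ^ 2 < (1 - ρ ^ 2) * (α / (Real.pi * qA α t) - 1) := by
      have key : (1 - ρ ^ 2) * (α / (Real.pi * qA α t) - 1) - ρ ^ 2
          = ((1 - ρ ^ 2) * α - Real.pi * qA α t) / (Real.pi * qA α t) := by
        field_simp; ring
      have hpos : 0 < ((1 - ρ ^ 2) * α - Real.pi * qA α t) / (Real.pi * qA α t) :=
        div_pos (by linarith [hπQ]) hQP
      linarith [key, hpos]
    have hg := g_ge hα ht
    have h1t : 1 - t = δ := by rw [htdef]; ring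
    have h1ρ : (0:ℝ) ≤ 1 - ρ ^ 2 := by nlinarith
    have hft : ρ * 1 + Real.sqrt ((1 - ρ ^ 2) * gAlpha α 1)
        < ρ * t + Real.sqrt ((1 - ρ ^ 2) * gAlpha α t) := by
      have hδ2 : 0 < δ ^ 2 := by positivity
      have s0 : (1 - ρ ^ 2) * ((α / (Real.pi * qA α t) - 1) * (1 - t) ^ 2)
          ≤ (1 - ρ ^ 2) * gAlpha α t := mul_le_mul_of_nonneg_left hg h1ρ
      rw [h1t] at s0
      have s1 : (ρ * δ) ^ 2 < (1 - ρ ^ 2) * gAlpha α t := by nlinarith [hMkey, hδ2, s0]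
      have s2 : ρ * δ < Real.sqrt ((1 - ρ ^ 2) * gAlpha α t) := by
        calc ρ * δ = Real.sqrt ((ρ * δ) ^ 2) := (Real.sqrt_sq (by positivity)).symm
          _ < _ := Real.sqrt_lt_sqrt (sq_nonneg _) s1
      have hρt : ρ * t = ρ - ρ * δ := by rw [htdef]; ring
      rw [g_one hα]
      simp only [mul_zero, Real.sqrt_zero, add_zero, mul_one]
      linarith [s2, hρt]
    have hmem_t : t ∈ Set.Icc (0:ℝ) 1 := ⟨ht.1, ht.2.le⟩
    have hle := isMaxOn_iff.mp hmax t hmem_t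
    have hne : sstar ≠ 1 := by
      intro h
      rw [h] at hle
      linarith [hft, hle]
    have hslt : sstar < 1 := lt_of_le_of_ne hs.2 hne
    refine ⟨hslt, ?_⟩
    rw [abs_of_nonneg hs.1]
    nlinarith [mul_pos (sub_pos.mpr hslt) (sub_pos.mpr hslt), sq_nonneg (rAlpha α sstar)]
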